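/- Let a ≥ 0 and c be real numbers. The matrix 1 + a D_λ + c |ψ⟩⟨ψ| is positive semidefinite for every probability distribution λ on {1,...,n} (with D_λ diagonal with entries λ_i and |ψ⟩ = Σ_i √λ_i |i⟩) if and only if c + a/n + 1 ≥ 0. -/

import Mathlib

open Matrix

private lemma quadform (n : ℕ) (a c : ℝ) (lam x : Fin n → ℝ) (hl : ∀ i, 0 ≤ lam i) :
    x ⬝ᵥ (((1 : Matrix (Fin n) (Fin n) ℝ) + a • Matrix.diagonal lam +
      c • Matrix.of (fun i j => Real.sqrt (lam i * lam j))) *ᵥ x)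
    = (∑ i, (x i)^2) + a * (∑ i, lam i * (x i)^2)
      + c * (∑ i, Real.sqrt (lam i) * x i)^2 := by
  simp only [Matrix.add_mulVec, dotProduct_add, Matrix.smul_mulVec,
    dotProduct_smul, Matrix.one_mulVec, smul_eq_mul]
  congr 1
  · congr 1
    · simp [dotProduct, sq]
    · congr 1
      simp only [dotProduct, Matrix.mulVec_diagonal]
      apply Finset.sum_congr rfl
      intro i _
      ring
  · congr 1
    rw [sq, Finset.sum_mul_sum]
    simp only [dotProduct, Matrix.mulVec, Matrix.of_apply, Finset.mul_sum]
    apply Finset.sum_congr rfl; intro i _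
    apply Finset.sum_congr rfl; intro j _
    rw [Real.sqrt_mul (hl i)]
    ring

private lemma sum_div_le (n : ℕ) (hn : 0 < n) (a : ℝ) (ha : 0 ≤ a) (lam : Fin n → ℝ)
    (hl : ∀ i, 0 ≤ lam i) (hs : ∑ i, lam i = 1) :
    (∑ i, lam i / (1 + a * lam i)) ≤ n / (n + a) := by
  have hn' : (0:ℝ) < n := by exact_mod_cast hn
  have hna : (0:ℝ) < n + a := by linarith
  calc (∑ i, lam i / (1 + a * lam i))
      ≤ ∑ i, (a + n^2 * lam i) / (n + a)^2 := by
        apply Finset.sum_le_sum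
        intro i _
        have hy : (0:ℝ) < 1 + a * lam i := by nlinarith [hl i]
        rw [div_le_div_iff₀ hy (by positivity)]
        nlinarith [mul_nonneg ha (sq_nonneg ((n:ℝ) * lam i - 1)), hl i]
    _ = n / (n + a) := by
        rw [← Finset.sum_div]
        rw [Finset.sum_add_distrib, ← Finset.mul_sum, hs, Finset.sum_const]
        simp only [Finset.card_univ, Fintype.card_fin, nsmul_eq_mul, mul_one]
        field_simp
        ring

private lemma key_ineq (n : ℕ) (hn : 0 < n) (a : ℝ) (ha : 0 ≤ a) (lam x : Fin n → ℝ)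
    (hl : ∀ i, 0 ≤ lam i) (hs : ∑ i, lam i = 1) :
    ((n : ℝ) + a) * (∑ i, Real.sqrt (lam i) * x i)^2
      ≤ n * ((∑ i, (x i)^2) + a * (∑ i, lam i * (x i)^2)) := by
  have hn' : (0:ℝ) < n := by exact_mod_cast hn
  have hna : (0:ℝ) < n + a := by linarith
  set S : ℝ := (∑ i, (x i)^2) + a * (∑ i, lam i * (x i)^2) with hS
  have hy : ∀ i, (0:ℝ) < 1 + a * lam i := fun i => by nlinarith [hl i]
  have hSalt : S = ∑ i, (1 + a * lam i) * (x i)^2 := by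
    simp only [add_mul, one_mul, Finset.sum_add_distrib, Finset.mul_sum, hS]
    congr 1
    apply Finset.sum_congr rfl; intro i _; ring
  have hS0 : 0 ≤ S := by
    rw [hSalt]
    apply Finset.sum_nonneg
    intro i _
    exact mul_nonneg (le_of_lt (hy i)) (sq_nonneg _)
  -- Cauchy-Schwarz
  have cs : (∑ i, Real.sqrt (lam i) * x i)^2
      ≤ (∑ i, lam i / (1 + a * lam i)) * S := by
    rw [hSalt]
    have := Finset.sum_mul_sq_le_sq_mul_sq Finset.univ
      (fun i => Real.sqrt (lam i) / Real.sqrt (1 + a * lam i))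
      (fun i => Real.sqrt (1 + a * lam i) * x i)
    calc (∑ i, Real.sqrt (lam i) * x i)^2
        = (∑ i, (Real.sqrt (lam i) / Real.sqrt (1 + a * lam i)) *
            (Real.sqrt (1 + a * lam i) * x i))^2 := by
          congr 1
          apply Finset.sum_congr rfl; intro i _
          have h0 : Real.sqrt (1 + a * lam i) ≠ 0 := ne_of_gt (Real.sqrt_pos.mpr (hy i))
          field_simp
      _ ≤ (∑ i, (Real.sqrt (lam i) / Real.sqrt (1 + a * lam i))^2) *
            (∑ i, (Real.sqrt (1 + a * lam i) * x i)^2) := this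
      _ = (∑ i, lam i / (1 + a * lam i)) * (∑ i, (1 + a * lam i) * (x i)^2) := by
          congr 1
          · apply Finset.sum_congr rfl; intro i _
            rw [div_pow, Real.sq_sqrt (hl i), Real.sq_sqrt (le_of_lt (hy i))]
          · apply Finset.sum_congr rfl; intro i _
            rw [mul_pow, Real.sq_sqrt (le_of_lt (hy i))]
  have hb := sum_div_le n hn a ha lam hl hs
  have h2 : (∑ i, lam i / (1 + a * lam i)) * S ≤ (n / (n + a)) * S :=
    mul_le_mul_of_nonneg_right hb hS0
  have h3 : (∑ i, Real.sqrt (lam i) * x i)^2 ≤ (n / (n + a)) * S := le_trans cs h2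
  calc ((n : ℝ) + a) * (∑ i, Real.sqrt (lam i) * x i)^2
      ≤ ((n : ℝ) + a) * ((n / (n + a)) * S) := by
        exact mul_le_mul_of_nonneg_left h3 (le_of_lt hna)
    _ = n * S := by field_simp
    _ = n * S := rfl

theorem chi_posSemidef_iff_of_nonneg_a (n : ℕ) (hn : 0 < n) (a c : ℝ) (ha : 0 ≤ a) :
    (∀ lam : Fin n → ℝ, (∀ i, 0 ≤ lam i) → ∑ i, lam i = 1 →
        ((1 : Matrix (Fin n) (Fin n) ℝ) + a • Matrix.diagonal lam +
          c • Matrix.of (fun i j => Real.sqrt (lam i * lam j))).PosSemidef)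
      ↔ c + a / n + 1 ≥ 0 := by
  have hn' : (0:ℝ) < n := by exact_mod_cast hn
  constructor
  · intro h
    have hl : ∀ i : Fin n, (0:ℝ) ≤ (n:ℝ)⁻¹ := fun i => by positivity
    have hs : ∑ _i : Fin n, (n:ℝ)⁻¹ = 1 := by
      rw [Finset.sum_const, Finset.card_univ, Fintype.card_fin, nsmul_eq_mul]
      field_simp
    have hpsd := h (fun _ => (n:ℝ)⁻¹) hl hs
    have hq := hpsd.dotProduct_mulVec_nonneg (fun _ => (1:ℝ))
    rw [show (star fun _ : Fin n => (1:ℝ)) = (fun _ : Fin n => (1:ℝ)) by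
      funext i; simp] at hq
    rw [quadform n a c _ _ hl] at hq
    simp only [one_pow, mul_one, Finset.sum_const, Finset.card_univ,
      Fintype.card_fin, nsmul_eq_mul] at hq
    have hsq : (Real.sqrt (n:ℝ)⁻¹)^2 = (n:ℝ)⁻¹ := Real.sq_sqrt (by positivity)
    have e1 : (n:ℝ) * (n:ℝ)⁻¹ = 1 := mul_inv_cancel₀ (ne_of_gt hn')
    have e2 : ((n:ℝ) * Real.sqrt (n:ℝ)⁻¹)^2 = (n:ℝ) := by
      rw [mul_pow, hsq, sq, mul_assoc, e1, mul_one]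
    rw [e1, e2, mul_one] at hq
    have h0 : 0 ≤ (n:ℝ) + a + c * (n:ℝ) := by linarith
    rw [ge_iff_le, ← sub_nonneg]
    have : c + a / n + 1 - 0 = ((n:ℝ) + a + c * n) / n := by field_simp; ring
    rw [this]
    positivity
  · intro h lam hl hs
    refine Matrix.PosSemidef.of_dotProduct_mulVec_nonneg ?_ ?_
    · unfold Matrix.IsHermitian
      ext i j
      simp only [Matrix.conjTranspose_apply, Matrix.add_apply, Matrix.smul_apply,
        Matrix.one_apply, Matrix.diagonal_apply, Matrix.of_apply, star_trivial,
        smul_eq_mul]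
      rw [mul_comm (lam j) (lam i)]
      by_cases hij : i = j
      · subst hij; rfl
      · rw [if_neg hij, if_neg (Ne.symm hij), if_neg hij, if_neg (Ne.symm hij)]
    · intro x
      have hsx : star x = x := by funext i; simp
      rw [hsx, quadform n a c lam x hl]
      set S : ℝ := (∑ i, (x i)^2) + a * (∑ i, lam i * (x i)^2) with hS
      set t : ℝ := ∑ i, Real.sqrt (lam i) * x i with ht
      have hS0 : 0 ≤ S := by
        apply add_nonneg
        · exact Finset.sum_nonneg fun i _ => sq_nonneg _
        · exact mul_nonneg ha (Finset.sum_nonneg fun i _ =>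
            mul_nonneg (hl i) (sq_nonneg _))
      rcases le_or_gt 0 c with hc | hc
      · have : 0 ≤ c * t^2 := mul_nonneg hc (sq_nonneg _)
        linarith
      · have hkey := key_ineq n hn a ha lam x hl hs
        rw [← hS, ← ht] at hkey
        have hna : (0:ℝ) < n + a := by linarith
        have h0 : 0 ≤ (n:ℝ) + a + c * n := by
          have : ((n:ℝ) + a + c * n) = n * (c + a / n + 1) := by field_simp; ring
          rw [this]
          exact mul_nonneg (le_of_lt hn') h
        have h1 : c * ((n:ℝ) * S - ((n:ℝ) + a) * t^2) ≤ 0 :=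
          mul_nonpos_of_nonpos_of_nonneg (le_of_lt hc) (by linarith)
        have h2 : 0 ≤ S * ((n:ℝ) + a + c * n) := mul_nonneg hS0 h0
        nlinarith [sq_nonneg t]
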